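/- Let w∈S_n be covexillary and let v'≤v≤w in Bruhat order. Then (i) r^{v'}_e ≤ r^v_e for every box e; (ii) B(v,w) ⊆ B(v',w); and (iii) with λ=λ(w)=(λ₁≥⋯≥λ_ℓ>0), the flags b_i = max{m≥1 : B(v,w)_m ≥ λ_i+m−i} and b'_i = max{m≥1 : B(v',w)_m ≥ λ_i+m−i} satisfy b_i ≤ b'_i for every 1≤i≤ℓ (here B_m denotes the number of boxes in row m of the Young diagram B). -/

import Mathlib

open scoped Classical

noncomputable section

namespace DriftKL

/-- `w : ℕ → ℕ` restricts to a permutation of `{1, …, n}`. -/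
def IsPermOn (n : ℕ) (w : ℕ → ℕ) : Prop :=
  (∀ i, 1 ≤ i → i ≤ n → 1 ≤ w i ∧ w i ≤ n) ∧
  (∀ i j, 1 ≤ i → i ≤ n → 1 ≤ j → j ≤ n → w i = w j → i = j) ∧
  (∀ k, 1 ≤ k → k ≤ n → ∃ i, 1 ≤ i ∧ i ≤ n ∧ w i = k)

/-- Coxeter length = number of inversions. -/
def invLen (n : ℕ) (u : ℕ → ℕ) : ℕ :=
  (((Finset.Icc 1 n) ×ˢ (Finset.Icc 1 n)).filter
    (fun p => p.1 < p.2 ∧ u p.2 < u p.1)).card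

/-- Covering step for Bruhat order: right multiplication by a transposition
raising the length by exactly one. -/
def BruhatCovers (n : ℕ) (u u' : ℕ → ℕ) : Prop :=
  ∃ x y : ℕ, 1 ≤ x ∧ x ≤ n ∧ 1 ≤ y ∧ y ≤ n ∧ x ≠ y ∧
    (∀ t, u' t = u (Equiv.swap x y t)) ∧ invLen n u' = invLen n u + 1

/-- Bruhat order on permutations of `{1, …, n}`. -/
def Bruhat (n : ℕ) (u w : ℕ → ℕ) : Prop := Relation.ReflTransGen (BruhatCovers n) u w

/-- `w` avoids the pattern `3412`. -/
def Covexillary (n : ℕ) (w : ℕ → ℕ) : Prop :=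
  ¬ ∃ i1 i2 i3 i4, 1 ≤ i1 ∧ i1 < i2 ∧ i2 < i3 ∧ i3 < i4 ∧ i4 ≤ n ∧
      w i3 < w i4 ∧ w i4 < w i1 ∧ w i1 < w i2

/-- `r^v_{(i,j)}`: the number of points `(n - v(p) + 1, p)` of the graph of `v`
weakly southwest of the box `(i,j)`. -/
def rv (n : ℕ) (v : ℕ → ℕ) (i j : ℕ) : ℕ :=
  ((Finset.Icc 1 j).filter (fun p => n + 1 - v p ≤ i)).card

/-- The diagram `D(w)` (in the paper's bottom-to-top convention). -/
def Dset (n : ℕ) (w : ℕ → ℕ) : Finset (ℕ × ℕ) :=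
  ((Finset.Icc 1 n) ×ˢ (Finset.Icc 1 n)).filter
    (fun p => p.1 < n + 1 - w p.2 ∧ ∀ q ∈ Finset.Icc 1 n, w q = n + 1 - p.1 → p.2 < q)

/-- The essential set `E(w)`. -/
def Eset (n : ℕ) (w : ℕ → ℕ) : Finset (ℕ × ℕ) :=
  (Dset n w).filter (fun p => (p.1 + 1, p.2) ∉ Dset n w ∧ (p.1, p.2 + 1) ∉ Dset n w)

/-- The multiset of sizes of the nonempty rows of `D(w)`; sorted decreasingly it
is the shape `λ(w)`. -/
def rowSizesD (n : ℕ) (w : ℕ → ℕ) : Multiset ℕ :=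
  Multiset.filter (fun x => 0 < x)
    ((Finset.Icc 1 n).val.map (fun i => ((Dset n w).filter (fun p => p.1 = i)).card))

/-- The partition `λ(w)` as a decreasingly sorted list. -/
def lamListOf (n : ℕ) (w : ℕ → ℕ) : List ℕ :=
  ((rowSizesD n w).sort (· ≤ ·)).reverse

/-- `λ(w)_i` (1-indexed, `0` beyond the last part). -/
def lamOf (n : ℕ) (w : ℕ → ℕ) (i : ℕ) : ℕ := (lamListOf n w).getD (i - 1) 0

/-- The number of parts `ℓ` of `λ(w)`. -/
def ellOf (n : ℕ) (w : ℕ → ℕ) : ℕ := (lamListOf n w).length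

/-- Row `m` of `B(v,w)`, the smallest Young diagram containing `(1,1)` together
with every box `(i - r^v_e, j - r^v_e)` for `e = (i,j) ∈ E(w)`. -/
def Bfun (n : ℕ) (v w : ℕ → ℕ) (m : ℕ) : ℕ :=
  (insert ((1 : ℕ), (1 : ℕ)) ((Eset n w).image
      (fun e => (e.1 - rv n v e.1 e.2, e.2 - rv n v e.1 e.2)))).sup
    (fun p => if m ≤ p.1 then p.2 else 0)

/-- The flag `b_i = max{m ≥ 1 : B(v,w)_m ≥ λ(w)_i + m - i}`. -/
def FlagOf (n : ℕ) (v w : ℕ → ℕ) (i : ℕ) : ℕ :=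
  sSup {m : ℕ | 1 ≤ m ∧ (lamOf n w i : ℤ) + m - i ≤ (Bfun n v w m : ℤ)}

/-- For covexillary `w` and `v' ≤ v ≤ w` in Bruhat order:
(i) `r^{v'}_e ≤ r^v_e` for every box `e`; (ii) `B(v,w) ⊆ B(v',w)`; and
(iii) the corresponding flags satisfy `b_i ≤ b'_i` for `1 ≤ i ≤ ℓ`. -/
lemma invLen_eq_sum (n : ℕ) (u : ℕ → ℕ) :
    invLen n u = ∑ e ∈ ((Finset.Icc 1 n) ×ˢ (Finset.Icc 1 n)).filter (fun p => p.1 < p.2),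
      (if u e.2 < u e.1 then 1 else 0) := by
  rw [invLen, ← Finset.filter_filter, Finset.card_filter]

private def psa (x y p q : ℕ) : ℕ := if p = x then (if y < q then y else p) else if p = y then x else p
private def psb (x y p q : ℕ) : ℕ := if q = x then y else if q = y then (if p < x then x else q) else q
private def psi (x y : ℕ) (e : ℕ × ℕ) : ℕ × ℕ := (psa x y e.1 e.2, psb x y e.1 e.2)

set_option maxHeartbeats 1000000 in
lemma swap_invLen_le (n : ℕ) (u : ℕ → ℕ) (x y : ℕ) (hx1 : 1 ≤ x) (hxn : x ≤ n)
    (hy1 : 1 ≤ y) (hyn : y ≤ n) (hxy : x < y) (hab : u y ≤ u x) :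
    invLen n (fun t => u (Equiv.swap x y t)) ≤ invLen n u := by
  rw [invLen_eq_sum, invLen_eq_sum]
  set Sn := ((Finset.Icc 1 n) ×ˢ (Finset.Icc 1 n)).filter (fun p : ℕ × ℕ => p.1 < p.2) with hSn
  have hmem : ∀ e : ℕ × ℕ, e ∈ Sn ↔ (1 ≤ e.1 ∧ e.1 ≤ n ∧ 1 ≤ e.2 ∧ e.2 ≤ n ∧ e.1 < e.2) := by
    intro e
    simp [hSn, Finset.mem_filter, Finset.mem_product, Finset.mem_Icc, and_assoc]
  have hswap : ∀ t, Equiv.swap x y t = if t = x then y else if t = y then x else t := by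
    intro t; rw [Equiv.swap_apply_def]
  have hmemψ : ∀ e ∈ Sn, psi x y e ∈ Sn := by
    intro e he
    rw [hmem] at he ⊢
    obtain ⟨p, q⟩ := e
    dsimp only at he
    simp only [psi, psa, psb]
    split_ifs <;> (try dsimp only) <;> omega
  have hinv : ∀ e ∈ Sn, psi x y (psi x y e) = e := by
    intro e he
    rw [hmem] at he
    obtain ⟨p, q⟩ := e
    dsimp only at he
    simp only [psi, psa, psb, Prod.mk.injEq]
    split_ifs <;> omega
  have step1 : ∑ e ∈ Sn, (if u (Equiv.swap x y e.2) < u (Equiv.swap x y e.1) then 1 else 0)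
      = ∑ e ∈ Sn, (if u (Equiv.swap x y (psi x y e).2) < u (Equiv.swap x y (psi x y e).1) then 1 else 0) := by
    apply Finset.sum_nbij' (i := psi x y) (j := psi x y) hmemψ hmemψ hinv hinv
    intro e he
    rw [hinv e he]
  rw [step1]
  apply Finset.sum_le_sum
  intro e he
  rw [hmem] at he
  obtain ⟨p, q⟩ := e
  dsimp only at he
  simp only [psi, psa, psb, hswap]
  split_ifs <;> subst_vars <;> omega

lemma rv_eq_sum (n : ℕ) (v : ℕ → ℕ) (i j : ℕ) :
    rv n v i j = ∑ p ∈ Finset.Icc 1 j, (if n + 1 - v p ≤ i then 1 else 0) := by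
  rw [rv, Finset.card_filter]

lemma covers_rv_le_aux {n : ℕ} {u u' : ℕ → ℕ} {x y : ℕ} (hx1 : 1 ≤ x) (hxn : x ≤ n)
    (hy1 : 1 ≤ y) (hyn : y ≤ n) (hxy : x < y)
    (hu' : ∀ t, u' t = u (Equiv.swap x y t)) (hlen : invLen n u' = invLen n u + 1)
    (i j : ℕ) : rv n u i j ≤ rv n u' i j := by
  have hab : u x < u y := by
    by_contra hc
    push_neg at hc
    have hle := swap_invLen_le n u x y hx1 hxn hy1 hyn hxy hc
    have heq : invLen n u' = invLen n (fun t => u (Equiv.swap x y t)) := by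
      have : u' = fun t => u (Equiv.swap x y t) := funext hu'
      rw [this]
    omega
  rw [rv_eq_sum, rv_eq_sum]
  by_cases hyj : y ≤ j
  · have : ∑ p ∈ Finset.Icc 1 j, (if n + 1 - u' p ≤ i then 1 else 0)
        = ∑ p ∈ Finset.Icc 1 j, (if n + 1 - u p ≤ i then 1 else 0) := by
      have hmem : ∀ p ∈ Finset.Icc 1 j, Equiv.swap x y p ∈ Finset.Icc 1 j := by
        intro p hp
        rw [Finset.mem_Icc] at hp ⊢
        rw [Equiv.swap_apply_def]
        split_ifs <;> omega
      have hinv : ∀ p ∈ Finset.Icc 1 j, Equiv.swap x y (Equiv.swap x y p) = p := by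
        intro p _; exact Equiv.swap_apply_self x y p
      apply Finset.sum_nbij' (i := fun p => Equiv.swap x y p) (j := fun p => Equiv.swap x y p)
        hmem hmem hinv hinv
      intro p _
      rw [hu' p]
    omega
  · apply Finset.sum_le_sum
    intro p hp
    rw [Finset.mem_Icc] at hp
    rcases eq_or_ne p x with rfl | hpx
    · rw [hu', Equiv.swap_apply_left]
      have : n + 1 - u y ≤ n + 1 - u p := by omega
      split_ifs <;> omega
    · have hpy : p ≠ y := by omega
      rw [hu', Equiv.swap_apply_of_ne_of_ne hpx hpy]

lemma covers_rv_le {n : ℕ} {u u' : ℕ → ℕ} (h : BruhatCovers n u u') (i j : ℕ) :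
    rv n u i j ≤ rv n u' i j := by
  obtain ⟨x, y, hx1, hxn, hy1, hyn, hne, hu', hlen⟩ := h
  rcases hne.lt_or_gt with hxy | hyx
  · exact covers_rv_le_aux hx1 hxn hy1 hyn hxy hu' hlen i j
  · have hu'' : ∀ t, u' t = u (Equiv.swap y x t) := by
      intro t; rw [hu', Equiv.swap_comm]
    exact covers_rv_le_aux hy1 hyn hx1 hxn hyx hu'' hlen i j

lemma bruhat_rv_le {n : ℕ} {u w : ℕ → ℕ} (h : Bruhat n u w) (i j : ℕ) :
    rv n u i j ≤ rv n w i j := by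
  induction h with
  | refl => exact le_rfl
  | tail _ hstep ih => exact le_trans ih (covers_rv_le hstep i j)


lemma Eset_fst_le {n : ℕ} {w : ℕ → ℕ} {e : ℕ × ℕ} (he : e ∈ Eset n w) : e.1 ≤ n := by
  simp only [Eset, Dset, Finset.mem_filter, Finset.mem_product, Finset.mem_Icc] at he
  exact he.1.1.1.2

lemma Bfun_le {n : ℕ} {v' v w : ℕ → ℕ}
    (hrv : ∀ i j, rv n v' i j ≤ rv n v i j) (m : ℕ) :
    Bfun n v w m ≤ Bfun n v' w m := by
  unfold Bfun
  apply Finset.sup_le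
  intro p hp
  rw [Finset.mem_insert] at hp
  rcases hp with rfl | hp
  · exact Finset.le_sup (f := fun p : ℕ × ℕ => if m ≤ p.1 then p.2 else 0)
      (Finset.mem_insert_self _ _)
  · obtain ⟨e, he, rfl⟩ := Finset.mem_image.1 hp
    have hmem' : ((e.1 - rv n v' e.1 e.2, e.2 - rv n v' e.1 e.2) : ℕ × ℕ) ∈
        insert ((1 : ℕ), (1 : ℕ)) ((Eset n w).image
          (fun e => (e.1 - rv n v' e.1 e.2, e.2 - rv n v' e.1 e.2))) :=
      Finset.mem_insert_of_mem (Finset.mem_image_of_mem _ he)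
    refine le_trans ?_ (Finset.le_sup (f := fun p : ℕ × ℕ => if m ≤ p.1 then p.2 else 0) hmem')
    have h := hrv e.1 e.2
    dsimp only
    split_ifs <;> omega

lemma Bfun_eq_zero {n : ℕ} {v w : ℕ → ℕ} {m : ℕ} (hm : n + 2 ≤ m) :
    Bfun n v w m = 0 := by
  unfold Bfun
  rw [← Nat.le_zero]
  apply Finset.sup_le
  intro p hp
  rw [Finset.mem_insert] at hp
  rcases hp with rfl | hp
  · simp only []
    have : ¬ m ≤ (1 : ℕ) := by omega
    simp [this]
  · obtain ⟨e, he, rfl⟩ := Finset.mem_image.1 hp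
    have h1 := Eset_fst_le he
    have : ¬ m ≤ e.1 - rv n v e.1 e.2 := by omega
    simp [this]

lemma mem_lamListOf_pos {n : ℕ} {w : ℕ → ℕ} {a : ℕ} (h : a ∈ lamListOf n w) : 0 < a := by
  unfold lamListOf at h
  rw [List.mem_reverse, Multiset.mem_sort] at h
  exact (Multiset.mem_filter.1 h).2

lemma lamOf_pos {n : ℕ} {w : ℕ → ℕ} {i : ℕ} (hi1 : 1 ≤ i) (hiℓ : i ≤ ellOf n w) :
    1 ≤ lamOf n w i := by
  unfold lamOf
  have hlt : i - 1 < (lamListOf n w).length := by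
    have : ellOf n w = (lamListOf n w).length := rfl
    omega
  rw [List.getD_eq_getElem _ _ hlt]
  exact mem_lamListOf_pos (List.getElem_mem hlt)

theorem statement8 (n : ℕ) (v' v w : ℕ → ℕ)
    (hv' : IsPermOn n v') (hv : IsPermOn n v) (hw : IsPermOn n w)
    (hcov : Covexillary n w)
    (h1 : Bruhat n v' v) (h2 : Bruhat n v w) :
    (∀ i j, 1 ≤ i → i ≤ n → 1 ≤ j → j ≤ n → rv n v' i j ≤ rv n v i j) ∧
    (∀ m, 1 ≤ m → Bfun n v w m ≤ Bfun n v' w m) ∧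
    (∀ i, 1 ≤ i → i ≤ ellOf n w → FlagOf n v w i ≤ FlagOf n v' w i) := by
  have hrv : ∀ i j, rv n v' i j ≤ rv n v i j := fun i j => bruhat_rv_le h1 i j
  refine ⟨fun i j _ _ _ _ => hrv i j, fun m _ => Bfun_le hrv m, ?_⟩
  intro i hi1 hiℓ
  unfold FlagOf
  set Sv := {m : ℕ | 1 ≤ m ∧ (lamOf n w i : ℤ) + m - i ≤ (Bfun n v w m : ℤ)} with hSv
  set Sv' := {m : ℕ | 1 ≤ m ∧ (lamOf n w i : ℤ) + m - i ≤ (Bfun n v' w m : ℤ)} with hSv'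
  have hsub : Sv ⊆ Sv' := by
    intro m hm
    obtain ⟨hm1, hm2⟩ := hm
    refine ⟨hm1, le_trans hm2 ?_⟩
    exact_mod_cast Bfun_le hrv m
  have hlam := lamOf_pos hi1 hiℓ
  have hbdd : ∀ m ∈ Sv', m ≤ n + 1 + i := by
    intro m hm
    obtain ⟨hm1, hm2⟩ := hm
    by_contra hc
    push_neg at hc
    have hz : Bfun n v' w m = 0 := Bfun_eq_zero (by omega)
    rw [hz] at hm2
    push_cast at hm2
    omega
  rcases Set.eq_empty_or_nonempty Sv with hemp | hne
  · rw [hemp, csSup_empty]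
    exact bot_le
  · exact csSup_le_csSup ⟨n + 1 + i, fun m hm => hbdd m hm⟩ hne hsub

end DriftKL
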